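/- Perturbation bound at t for the hybrid loss (corrected inequality (12) in the proof of Theorem 1): In the perturbation setup, for every α ∈ [0,1], ℓ_α(p,t) − ℓ_α(q,t) > −ε·(2−α)/(p y* − ε). -/

import Mathlib

open Real

/-- The maximum of `p` over all labels different from `y`
(as a supremum, which for a finite nonempty label set equals the maximum). -/
noncomputable def maxNe {Y : Type*} (p : Y → ℝ) (y : Y) : ℝ :=
  sSup {x : ℝ | ∃ y' : Y, y' ≠ y ∧ p y' = x}

/-- The multiclass hinge loss of a (strictly positive) distribution `p` at label `y`. -/
noncomputable def hingeLoss {Y : Type*} (p : Y → ℝ) (y : Y) : ℝ :=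
  max 0 (1 - Real.log (p y / maxNe p y))

/-- The log loss of a (strictly positive) distribution `p` at label `y`. -/
noncomputable def logLoss {Y : Type*} (p : Y → ℝ) (y : Y) : ℝ :=
  - Real.log (p y)

/-- The hybrid loss with mixture parameter `α`. -/
noncomputable def hybridLoss {Y : Type*} (α : ℝ) (p : Y → ℝ) (y : Y) : ℝ :=
  α * logLoss p y + (1 - α) * hingeLoss p y

/-- The conditional risk `L_α(p, D) = ∑ y, D y * ℓ_α(p, y)`. -/
noncomputable def condRisk {Y : Type*} [Fintype Y] (α : ℝ) (p D : Y → ℝ) : ℝ :=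
  ∑ y, D y * hybridLoss α p y

/-- `D` is a distribution over `Y`. -/
def IsDist {Y : Type*} [Fintype Y] (D : Y → ℝ) : Prop :=
  (∀ y, 0 ≤ D y) ∧ ∑ y, D y = 1

/-- `p` is a strictly positive distribution over `Y`. -/
def IsPosDist {Y : Type*} [Fintype Y] (p : Y → ℝ) : Prop :=
  (∀ y, 0 < p y) ∧ ∑ y, p y = 1

/-- Perturbation bound at t for the hybrid loss (corrected inequality (12)). -/
theorem perturbation_bound_hybrid_at_t {Y : Type*} [Fintype Y]
    (hcard : 1 < Fintype.card Y)
(p : Y → ℝ) (hp : IsPosDist p)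
    (t ystar : Y) (hne : t ≠ ystar) (hpt : p t = p ystar)
    (hlt : ∀ y, y ≠ t → y ≠ ystar → p y < p t)
    (ε : ℝ) (hε0 : 0 < ε) (hεpt : ε < p t)
    (hεlt : ∀ y, y ≠ t → y ≠ ystar → p y < p t - ε)
    (q : Y → ℝ) (hqstar : q ystar = p ystar + ε) (hqt : q t = p t - ε)
    (hq : ∀ y, y ≠ t → y ≠ ystar → q y = p y)
    (α : ℝ) (hα : α ∈ Set.Icc (0 : ℝ) 1) :
    -(ε * (2 - α)) / (p ystar - ε) < hybridLoss α p t - hybridLoss α q t := by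
  obtain ⟨hα0, hα1⟩ := hα
  have hpt0 : 0 < p t := hp.1 t
  have haε : 0 < p t - ε := sub_pos.2 hεpt
  have haε' : 0 < p t + ε := by linarith
  have hmax_p : maxNe p t = p ystar := by
    apply IsGreatest.csSup_eq
    constructor
    · exact ⟨ystar, hne.symm, rfl⟩
    · rintro x ⟨y', hy', rfl⟩
      by_cases h : y' = ystar
      · rw [h]
      · rw [← hpt]; exact (hlt y' hy' h).le
  have hmax_q : maxNe q t = p t + ε := by
    apply IsGreatest.csSup_eq
    constructor
    · exact ⟨ystar, hne.symm, by rw [hqstar, hpt]⟩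
    · rintro x ⟨y', hy', rfl⟩
      by_cases h : y' = ystar
      · rw [h, hqstar, hpt]
      · rw [hq y' hy' h]
        have := hεlt y' hy' h
        linarith
  have hhp : hingeLoss p t = 1 := by
    rw [hingeLoss, hmax_p, ← hpt, div_self hpt0.ne', Real.log_one]
    norm_num
  have hlog_neg : Real.log ((p t - ε) / (p t + ε)) < 0 := by
    apply Real.log_neg (by positivity)
    rw [div_lt_one haε']
    linarith
  have hhq : hingeLoss q t = 1 - Real.log ((p t - ε) / (p t + ε)) := by
    rw [hingeLoss, hmax_q, hqt, max_eq_right]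
    linarith
  set c : ℝ := ε / (p t - ε) with hc
  have hL1 : Real.log (p t / (p t - ε)) < c := by
    have h1 : p t / (p t - ε) ≠ 1 :=
      ((one_lt_div haε).2 (by linarith)).ne'
    have h2 := Real.log_lt_sub_one_of_pos (show (0:ℝ) < p t / (p t - ε) by positivity) h1
    have heq : p t / (p t - ε) - 1 = c := by
      rw [hc]; field_simp; ring
    linarith
  have hL2 : Real.log ((p t + ε) / (p t - ε)) < 2 * c := by
    have h1 : (p t + ε) / (p t - ε) ≠ 1 :=
      ((one_lt_div haε).2 (by linarith)).ne'
    have h2 := Real.log_lt_sub_one_of_pos (show (0:ℝ) < (p t + ε) / (p t - ε) by positivity) h1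
    have heq : (p t + ε) / (p t - ε) - 1 = 2 * c := by
      rw [hc]; field_simp; ring
    linarith
  have hL1' : Real.log (p t / (p t - ε)) = Real.log (p t) - Real.log (p t - ε) :=
    Real.log_div hpt0.ne' haε.ne'
  have hL2' : Real.log ((p t - ε) / (p t + ε)) = - Real.log ((p t + ε) / (p t - ε)) := by
    rw [← Real.log_inv, inv_div]
  have key : α * Real.log (p t / (p t - ε)) + (1 - α) * Real.log ((p t + ε) / (p t - ε))
      < c * (2 - α) := by
    rcases eq_or_lt_of_le hα1 with h | h
    · subst h; norm_num; linarith
    · have h1 : α * Real.log (p t / (p t - ε)) ≤ α * c :=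
        mul_le_mul_of_nonneg_left hL1.le hα0
      have h2 : (1 - α) * Real.log ((p t + ε) / (p t - ε)) < (1 - α) * (2 * c) :=
        mul_lt_mul_of_pos_left hL2 (by linarith)
      nlinarith
  have hdiff : hybridLoss α p t - hybridLoss α q t
      = -(α * Real.log (p t / (p t - ε))) - (1 - α) * Real.log ((p t + ε) / (p t - ε)) := by
    simp only [hybridLoss, logLoss, hhp, hhq, hqt, hL1', hL2']
    ring
  have hrw : -(ε * (2 - α)) / (p ystar - ε) = -(c * (2 - α)) := by
    rw [hc, ← hpt, neg_div, mul_div_right_comm]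
  rw [hrw, hdiff]
  linarith
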